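/- Let F(t)=t^3, G(t)=t, H(t)=1-(1-t)^{1/3} be distribution functions on [0,1]. Then R_{FG}(t)=G^{-1}(F(t)) and R_{GH}(t)=H^{-1}(G(t)) both have nonnegative third derivative on (0,1), but R_{FH}(t)=H^{-1}(F(t)) satisfies R_{FH}'''(t) = 18(28t^6 - 20t^3 + 1), which is negative for some t in (0,1). Hence the order ≤₃ (defined by third derivative of G^{-1}∘F being nonnegative) is not transitive. -/

import Mathlib

private lemma hd_cube (x : ℝ) : HasDerivAt (fun s : ℝ => s^3) (3*x^2) x := by
  simpa using hasDerivAt_pow 3 x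

private lemma dA1 : deriv (fun s : ℝ => s^3) = fun x : ℝ => 3*x^2 := by
  funext x; exact (hd_cube x).deriv

private lemma dA2 : deriv (fun x : ℝ => 3*x^2) = fun x : ℝ => 6*x := by
  funext x
  have : HasDerivAt (fun x : ℝ => 3*x^2) (6*x) x := by
    have := (hasDerivAt_pow 2 x).const_mul (3:ℝ)
    refine this.congr_deriv ?_; norm_num; ring
  exact this.deriv

private lemma dA3 : deriv (fun x : ℝ => 6*x) = fun _ : ℝ => 6 := by
  funext x
  have : HasDerivAt (fun x : ℝ => 6*x) 6 x := by
    simpa using (hasDerivAt_id x).const_mul (6:ℝ)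
  exact this.deriv

private lemma dB1 : deriv (fun s : ℝ => 1 - (1-s)^3) = fun x : ℝ => 3 - 6*x + 3*x^2 := by
  funext x
  have : HasDerivAt (fun s : ℝ => 1 - (1-s)^3) (3 - 6*x + 3*x^2) x := by
    have h1 : HasDerivAt (fun s : ℝ => 3*s - 3*s^2 + s^3) (3 - 6*x + 3*x^2) x := by
      have := (((hasDerivAt_id x).const_mul (3:ℝ)).sub
        ((hasDerivAt_pow 2 x).const_mul (3:ℝ))).add (hasDerivAt_pow 3 x)
      refine this.congr_deriv ?_; norm_num; ring
    have he : (fun s : ℝ => 1 - (1-s)^3) = fun s : ℝ => 3*s - 3*s^2 + s^3 := by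
      funext s; ring
    rw [he]; exact h1
  exact this.deriv

private lemma dB2 : deriv (fun x : ℝ => 3 - 6*x + 3*x^2) = fun x : ℝ => -6 + 6*x := by
  funext x
  have : HasDerivAt (fun x : ℝ => 3 - 6*x + 3*x^2) (-6 + 6*x) x := by
    have := ((hasDerivAt_const x (3:ℝ)).sub ((hasDerivAt_id x).const_mul (6:ℝ))).add
      ((hasDerivAt_pow 2 x).const_mul (3:ℝ))
    refine this.congr_deriv ?_; norm_num; ring
  exact this.deriv

private lemma dB3 : deriv (fun x : ℝ => -6 + 6*x) = fun _ : ℝ => 6 := by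
  funext x
  have : HasDerivAt (fun x : ℝ => -6 + 6*x) 6 x := by
    have := (hasDerivAt_const x (-6:ℝ)).add ((hasDerivAt_id x).const_mul (6:ℝ))
    refine this.congr_deriv ?_; simp
  exact this.deriv

private lemma dC1 : deriv (fun s : ℝ => 1 - (1-s^3)^3)
    = fun x : ℝ => 9*x^2 - 18*x^5 + 9*x^8 := by
  funext x
  have : HasDerivAt (fun s : ℝ => 1 - (1-s^3)^3) (9*x^2 - 18*x^5 + 9*x^8) x := by
    have h1 : HasDerivAt (fun s : ℝ => 3*s^3 - 3*s^6 + s^9)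
        (9*x^2 - 18*x^5 + 9*x^8) x := by
      have := (((hasDerivAt_pow 3 x).const_mul (3:ℝ)).sub
        ((hasDerivAt_pow 6 x).const_mul (3:ℝ))).add (hasDerivAt_pow 9 x)
      refine this.congr_deriv ?_; norm_num; ring
    have he : (fun s : ℝ => 1 - (1-s^3)^3) = fun s : ℝ => 3*s^3 - 3*s^6 + s^9 := by
      funext s; ring
    rw [he]; exact h1
  exact this.deriv

private lemma dC2 : deriv (fun x : ℝ => 9*x^2 - 18*x^5 + 9*x^8)
    = fun x : ℝ => 18*x - 90*x^4 + 72*x^7 := by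
  funext x
  have : HasDerivAt (fun x : ℝ => 9*x^2 - 18*x^5 + 9*x^8)
      (18*x - 90*x^4 + 72*x^7) x := by
    have := (((hasDerivAt_pow 2 x).const_mul (9:ℝ)).sub
      ((hasDerivAt_pow 5 x).const_mul (18:ℝ))).add ((hasDerivAt_pow 8 x).const_mul (9:ℝ))
    refine this.congr_deriv ?_; norm_num; ring
  exact this.deriv

private lemma dC3 : deriv (fun x : ℝ => 18*x - 90*x^4 + 72*x^7)
    = fun x : ℝ => 18 - 360*x^3 + 504*x^6 := by
  funext x
  have : HasDerivAt (fun x : ℝ => 18*x - 90*x^4 + 72*x^7)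
      (18 - 360*x^3 + 504*x^6) x := by
    have := (((hasDerivAt_id x).const_mul (18:ℝ)).sub
      ((hasDerivAt_pow 4 x).const_mul (90:ℝ))).add ((hasDerivAt_pow 7 x).const_mul (72:ℝ))
    refine this.congr_deriv ?_; norm_num; ring
  exact this.deriv

/-- With `F t = t³`, `G t = t`, `H t = 1 - (1-t)^{1/3}` on `[0,1]`,
we have `H⁻¹ u = 1 - (1-u)³` (verified below), `R_{FG} t = G⁻¹(F t) = t³`,
`R_{GH} t = H⁻¹(G t) = 1 - (1-t)³` and `R_{FH} t = H⁻¹(F t) = 1 - (1-t³)³`.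
Both `R_{FG}` and `R_{GH}` have nonnegative third derivative on `(0,1)`, but
`R_{FH}''' t = 18(28t⁶ - 20t³ + 1)` is negative somewhere in `(0,1)`:
the order `≤₃` is not transitive. -/
theorem stmt0 :
    -- H⁻¹(u) = 1 - (1-u)³, i.e. H (1 - (1-u)³) = u on [0,1]
    (∀ u ∈ Set.Icc (0:ℝ) 1,
      1 - (1 - (1 - (1-u)^3)) ^ ((1:ℝ)/3) = u) ∧
    -- F ≤₃ G : R_{FG}(t) = G⁻¹(F t) = t³ has nonnegative third derivative
    (∀ t ∈ Set.Ioo (0:ℝ) 1,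
      0 ≤ deriv (deriv (deriv (fun s : ℝ => s^3))) t) ∧
    -- G ≤₃ H : R_{GH}(t) = H⁻¹(G t) = 1 - (1-t)³ has nonnegative third derivative
    (∀ t ∈ Set.Ioo (0:ℝ) 1,
      0 ≤ deriv (deriv (deriv (fun s : ℝ => 1 - (1-s)^3))) t) ∧
    -- but R_{FH}(t) = H⁻¹(F t) = 1 - (1-t³)³ has third derivative 18(28t⁶-20t³+1)
    (∀ t ∈ Set.Ioo (0:ℝ) 1,
      deriv (deriv (deriv (fun s : ℝ => 1 - (1-s^3)^3))) t
        = 18*(28*t^6 - 20*t^3 + 1)) ∧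
    -- which is negative somewhere in (0,1): F ≤₃ H fails
    (∃ t ∈ Set.Ioo (0:ℝ) 1,
      deriv (deriv (deriv (fun s : ℝ => 1 - (1-s^3)^3))) t < 0) := by
  refine ⟨?_, ?_, ?_, ?_, ?_⟩
  · intro u hu
    have h1 : (0:ℝ) ≤ 1 - u := by linarith [hu.2]
    have he : (1:ℝ) - (1 - (1-u)^3) = (1-u)^3 := by ring
    rw [he, ← Real.rpow_natCast (1-u) 3, ← Real.rpow_mul h1]
    norm_num
  · intro t _
    rw [dA1, dA2, dA3]; norm_num
  · intro t _
    rw [dB1, dB2, dB3]; norm_num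
  · intro t _
    rw [dC1, dC2, dC3]; ring
  · refine ⟨7/10, by norm_num, ?_⟩
    rw [dC1, dC2, dC3]; norm_num
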